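/- arXiv:1112.5050 — 9 statements merged into one kernel-verified Lean document; each statement's English description precedes it below -/
import Mathlib

section
/- For every real q > 1 and every y > 0, the integral ∫₀^y s^q(1+s)^q/(1+2s)^{q-1} ds is strictly less than (2/(q+2)) · y^{q+1}(1+y)^{q+1}/(1+2y)^q. -/
open Real

theorem stmt_0 (q y : ℝ) (hq : 1 < q) (hy : 0 < y) :
    (∫ s in (0:ℝ)..y, s ^ q * (1 + s) ^ q / (1 + 2 * s) ^ (q - 1)) <
      (2 / (q + 2)) * (y ^ (q + 1) * (1 + y) ^ (q + 1) / (1 + 2 * y) ^ q) := by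
  have hq2 : q + 2 ≠ 0 := by linarith
  set f : ℝ → ℝ := fun s => s ^ q * (1 + s) ^ q / (1 + 2 * s) ^ (q - 1) with hf
  set p : ℝ → ℝ := fun s => s ^ q * (1 + s) ^ q / (1 + 2 * s) ^ (q + 1) with hp
  set F : ℝ → ℝ := fun s => (2 / (q + 2)) * (s ^ (q + 1) * (1 + s) ^ (q + 1) / (1 + 2 * s) ^ q)
    with hF
  -- continuity
  have hcx : Continuous (fun s : ℝ => s ^ q) := by
    rw [continuous_iff_continuousAt]
    exact fun x => Real.continuousAt_rpow_const x q (Or.inr (by linarith))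
  have hc1 : Continuous (fun s : ℝ => (1 + s) ^ q) := by
    rw [continuous_iff_continuousAt]
    intro x
    exact (Real.continuousAt_rpow_const _ q (Or.inr (by linarith))).comp
      (continuous_const.add continuous_id).continuousAt
  have hc2 : ∀ r : ℝ, 0 ≤ r → Continuous (fun s : ℝ => (1 + 2 * s) ^ r) := by
    intro r hr
    rw [continuous_iff_continuousAt]
    intro x
    exact (Real.continuousAt_rpow_const _ r (Or.inr hr)).comp
      (continuous_const.add (continuous_const.mul continuous_id)).continuousAt
  have hpos : ∀ s ∈ Set.uIcc (0:ℝ) y, (0:ℝ) < 1 + 2 * s := by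
    intro s hs
    rw [Set.uIcc_of_le hy.le] at hs
    nlinarith [hs.1]
  have hne : ∀ s ∈ Set.uIcc (0:ℝ) y, ∀ r : ℝ, (1 + 2 * s) ^ r ≠ 0 :=
    fun s hs r => (Real.rpow_pos_of_pos (hpos s hs) r).ne'
  -- integrability
  have hif : IntervalIntegrable f MeasureTheory.volume 0 y := by
    apply ContinuousOn.intervalIntegrable
    exact ((hcx.mul hc1).continuousOn.div ((hc2 (q-1) (by linarith)).continuousOn)
      (fun s hs => hne s hs (q-1)))
  have hip : IntervalIntegrable p MeasureTheory.volume 0 y := by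
    apply ContinuousOn.intervalIntegrable
    exact ((hcx.mul hc1).continuousOn.div ((hc2 (q+1) (by linarith)).continuousOn)
      (fun s hs => hne s hs (q+1)))
  -- derivative
  have hderiv : ∀ s ∈ Set.uIcc (0:ℝ) y,
      HasDerivAt F (f s + (q / (q + 2)) * p s) s := by
    intro s hs
    have hs0 : 0 ≤ s := by rw [Set.uIcc_of_le hy.le] at hs; exact hs.1
    have h1s : (0:ℝ) < 1 + s := by linarith
    have h2s : (0:ℝ) < 1 + 2 * s := by linarith
    have hA : HasDerivAt (fun t : ℝ => t ^ (q + 1)) ((q + 1) * s ^ q) s := by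
      have := Real.hasDerivAt_rpow_const (x := s) (p := q + 1) (Or.inr (by linarith))
      simpa using this
    have hB : HasDerivAt (fun t : ℝ => (1 + t) ^ (q + 1)) ((q + 1) * (1 + s) ^ q) s := by
      have := ((hasDerivAt_id s).const_add 1).rpow_const (p := q + 1) (Or.inl h1s.ne')
      simpa using this
    have hC : HasDerivAt (fun t : ℝ => (1 + 2 * t) ^ q) (2 * q * (1 + 2 * s) ^ (q - 1)) s := by
      have := (((hasDerivAt_id s).const_mul 2).const_add 1).rpow_const (p := q) (Or.inl h2s.ne')
      simpa [mul_comm, mul_assoc] using this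
    have hD := (((hA.mul hB).div hC (hne s hs q)).const_mul (2 / (q + 2)))
    convert hD using 1
    · rfl
    · rfl
    · rfl
    -- algebraic identity
    rcases eq_or_lt_of_le hs0 with h | h
    · simp only [hf, hp, ← h, Pi.mul_apply, Real.zero_rpow (by linarith : q ≠ 0),
        Real.zero_rpow (by linarith : q + 1 ≠ 0)]
      ring
    · have e1 : s ^ (q + 1) = s ^ q * s := Real.rpow_add_one h.ne' q
      have e2 : (1 + s) ^ (q + 1) = (1 + s) ^ q * (1 + s) := Real.rpow_add_one h1s.ne' q
      have e3 : (1 + 2 * s) ^ (q + 1) = (1 + 2 * s) ^ q * (1 + 2 * s) :=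
        Real.rpow_add_one h2s.ne' q
      have e4 : (1 + 2 * s) ^ (q - 1) = (1 + 2 * s) ^ q / (1 + 2 * s) :=
        Real.rpow_sub_one h2s.ne' q
      simp only [hf, hp, Pi.mul_apply, e1, e2, e3, e4]
      have hZ : (1 + 2 * s) ^ q ≠ 0 := hne s hs q
      field_simp
      ring
  -- FTC
  have hint : ∫ s in (0:ℝ)..y, (f s + (q / (q + 2)) * p s) = F y - F 0 :=
    intervalIntegral.integral_eq_sub_of_hasDerivAt hderiv (hif.add (hip.const_mul _))
  rw [intervalIntegral.integral_add hif (hip.const_mul _),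
      intervalIntegral.integral_const_mul] at hint
  have hF0 : F 0 = 0 := by
    simp [hF, Real.zero_rpow (by linarith : q + 1 ≠ 0)]
  have hppos : 0 < ∫ s in (0:ℝ)..y, p s := by
    apply intervalIntegral.intervalIntegral_pos_of_pos_on hip _ hy
    intro x hx
    have hx0 := hx.1
    exact div_pos (mul_pos (Real.rpow_pos_of_pos hx0 q)
      (Real.rpow_pos_of_pos (by linarith) q)) (Real.rpow_pos_of_pos (by linarith) (q + 1))
  have hqq : (0:ℝ) < q / (q + 2) := div_pos (by linarith) (by linarith)
  have hFy : F y = 2 / (q + 2) * (y ^ (q + 1) * (1 + y) ^ (q + 1) / (1 + 2 * y) ^ q) := rfl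
  rw [← hFy]
  have := mul_pos hqq hppos
  linarith
end

section
/- For every real q > 1 and every y > 0, the integral ∫₀^y s^q(1+s)^q/(1+2s)^{q-1} ds is strictly greater than (1/(q+1)) · y^{q+1}(1+y)^{q+1}/(1+2y)^q. -/
open Real

theorem stmt_1 (q y : ℝ) (hq : 1 < q) (hy : 0 < y) :
    (1 / (q + 1)) * (y ^ (q + 1) * (1 + y) ^ (q + 1) / (1 + 2 * y) ^ q) <
      ∫ s in (0:ℝ)..y, s ^ q * (1 + s) ^ q / (1 + 2 * s) ^ (q - 1) := by
  have hy0 : (0:ℝ) ≤ y := hy.le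
  have hq0 : (0:ℝ) < q := by linarith
  have hq1 : (0:ℝ) < q + 1 := by linarith
  have hq1' : q + 1 ≠ 0 := hq1.ne'
  set F : ℝ → ℝ := fun s => (1/(q+1)) * (s^(q+1)*(1+s)^(q+1)/(1+2*s)^q) with hF
  set g : ℝ → ℝ := fun s =>
    s^q*(1+s)^q/(1+2*s)^(q-1) - (2*q/(q+1)) * (s^(q+1)*(1+s)^(q+1)/(1+2*s)^(q+1)) with hg
  set h : ℝ → ℝ := fun s => (2*q/(q+1)) * (s^(q+1)*(1+s)^(q+1)/(1+2*s)^(q+1)) with hh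
  have hIcc : Set.uIcc (0:ℝ) y = Set.Icc 0 y := Set.uIcc_of_le hy0
  -- derivative
  have hderiv : ∀ s ∈ Set.uIcc (0:ℝ) y, HasDerivAt F (g s) s := by
    intro s hs
    rw [hIcc] at hs
    have hs0 : 0 ≤ s := hs.1
    have h1s : (0:ℝ) < 1 + s := by linarith
    have h2s : (0:ℝ) < 1 + 2*s := by linarith
    have hD0 : (1+2*s)^q ≠ 0 := (Real.rpow_pos_of_pos h2s q).ne'
    have d1 : HasDerivAt (fun x : ℝ => x^(q+1)) ((q+1)*s^q) s := by
      have := Real.hasDerivAt_rpow_const (x := s) (p := q+1) (Or.inr (by linarith))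
      simpa [show q+1-1 = q by ring] using this
    have d2 : HasDerivAt (fun x : ℝ => (1+x)^(q+1)) ((q+1)*(1+s)^q) s := by
      have hb : HasDerivAt (fun x : ℝ => 1+x) 1 s := (hasDerivAt_id s).const_add 1
      have := hb.rpow_const (p := q+1) (Or.inl h1s.ne')
      simpa [show q+1-1 = q by ring] using this
    have d3 : HasDerivAt (fun x : ℝ => (1+2*x)^q) (2*q*(1+2*s)^(q-1)) s := by
      have hb : HasDerivAt (fun x : ℝ => 1+2*x) 2 s := by
        simpa using ((hasDerivAt_id s).const_mul (2:ℝ)).const_add (1:ℝ)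
      have := hb.rpow_const (p := q) (Or.inl h2s.ne')
      simpa using this
    have dN := d1.mul d2
    have dF := (dN.div d3 hD0).const_mul (1/(q+1))
    have ea : s^(q+1) = s^q * s := by
      rcases eq_or_lt_of_le hs0 with h0 | h0
    
      · rw [← h0, Real.zero_rpow hq1', Real.zero_rpow hq0.ne']; ring
      · rw [Real.rpow_add_one h0.ne' q]
    have eb : (1+s)^(q+1) = (1+s)^q * (1+s) := Real.rpow_add_one h1s.ne' q
    have ed : (1+2*s)^q = (1+2*s)^(q-1) * (1+2*s) := by
      rw [← Real.rpow_add_one h2s.ne' (q-1), sub_add_cancel]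
    have ee : (1+2*s)^(q+1) = (1+2*s)^(q-1) * ((1+2*s)*(1+2*s)) := by
      rw [Real.rpow_add_one h2s.ne' q, ed]; ring
    refine (show HasDerivAt F _ s from dF).congr_deriv ?_
    simp only [hg, Pi.mul_apply]
    rw [ea, eb, ee, ed]
    have hd : (1+2*s)^(q-1) ≠ 0 := (Real.rpow_pos_of_pos h2s (q-1)).ne'
    field_simp
    ring
  -- continuity / integrability
  have hcf : ContinuousOn (fun s : ℝ => s^q*(1+s)^q/(1+2*s)^(q-1)) (Set.uIcc (0:ℝ) y) := by
    rw [hIcc]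
    apply ContinuousOn.div
    · exact (continuousOn_id.rpow_const (fun x hx => Or.inr hq0.le)).mul
        ((continuousOn_const.add continuousOn_id).rpow_const
          (fun x hx => Or.inl (by simp only [Pi.add_apply, Pi.mul_apply, id_eq]; intro hc; nlinarith [hx.1])))
    · exact (continuousOn_const.add (continuousOn_const.mul continuousOn_id)).rpow_const
        (fun x hx => Or.inl (by simp only [Pi.add_apply, Pi.mul_apply, id_eq]; intro hc; nlinarith [hx.1]))
    · intro x hx
      exact (Real.rpow_pos_of_pos (by nlinarith [hx.1]) _).ne'
  have hch : ContinuousOn h (Set.uIcc (0:ℝ) y) := by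
    rw [hIcc]
    apply ContinuousOn.mul continuousOn_const
    apply ContinuousOn.div
    · exact (continuousOn_id.rpow_const (fun x hx => Or.inr (by linarith))).mul
        ((continuousOn_const.add continuousOn_id).rpow_const
          (fun x hx => Or.inl (by simp only [Pi.add_apply, Pi.mul_apply, id_eq]; intro hc; nlinarith [hx.1])))
    · exact (continuousOn_const.add (continuousOn_const.mul continuousOn_id)).rpow_const
        (fun x hx => Or.inl (by simp only [Pi.add_apply, Pi.mul_apply, id_eq]; intro hc; nlinarith [hx.1]))
    · intro x hx
      exact (Real.rpow_pos_of_pos (by nlinarith [hx.1]) _).ne'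
  have hcg : ContinuousOn g (Set.uIcc (0:ℝ) y) := hcf.sub hch
  have hfint : IntervalIntegrable (fun s : ℝ => s^q*(1+s)^q/(1+2*s)^(q-1)) MeasureTheory.volume 0 y :=
    hcf.intervalIntegrable
  have hhint : IntervalIntegrable h MeasureTheory.volume 0 y := hch.intervalIntegrable
  have hgint : IntervalIntegrable g MeasureTheory.volume 0 y := hcg.intervalIntegrable
  have key : ∫ s in (0:ℝ)..y, g s = F y - F 0 :=
    intervalIntegral.integral_eq_sub_of_hasDerivAt hderiv hgint
  have hF0 : F 0 = 0 := by
    simp [hF, Real.zero_rpow hq1']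
  have hpos : 0 < ∫ s in (0:ℝ)..y, h s := by
    apply intervalIntegral.intervalIntegral_pos_of_pos_on hhint _ hy
    intro x hx
    have hx0 : 0 < x := hx.1
    have h1x : (0:ℝ) < 1 + x := by linarith
    have h2x : (0:ℝ) < 1 + 2*x := by linarith
    have := Real.rpow_pos_of_pos hx0 (q+1)
    have := Real.rpow_pos_of_pos h1x (q+1)
    have := Real.rpow_pos_of_pos h2x (q+1)
    simp only [hh]
    positivity
  have hsplit : (∫ s in (0:ℝ)..y, s^q*(1+s)^q/(1+2*s)^(q-1)) =
      (∫ s in (0:ℝ)..y, g s) + ∫ s in (0:ℝ)..y, h s := by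
    rw [← intervalIntegral.integral_add hgint hhint]
    congr 1
    ext s
    simp only [hg, hh]
    ring
  rw [hsplit, key, hF0, sub_zero]
  have : F y = (1 / (q + 1)) * (y ^ (q + 1) * (1 + y) ^ (q + 1) / (1 + 2 * y) ^ q) := rfl
  linarith
end

section
/- For every real q > 1 and every x > 0, the quantity F(x) := ((x+2)^q/(x+1)^{q+1}) · ∫₀¹ t^q (x+t)^q / (x+2t)^{q-1} dt satisfies 1/(q+1) < F(x) < 2/(q+2). -/
open Real Set intervalIntegral MeasureTheory

theorem stmt_2 (q x : ℝ) (hq : 1 < q) (hx : 0 < x) :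
    1 / (q + 1) <
      ((x + 2) ^ q / (x + 1) ^ (q + 1)) *
        ∫ t in (0:ℝ)..1, t ^ q * (x + t) ^ q / (x + 2 * t) ^ (q - 1) ∧
    ((x + 2) ^ q / (x + 1) ^ (q + 1)) *
        (∫ t in (0:ℝ)..1, t ^ q * (x + t) ^ q / (x + 2 * t) ^ (q - 1)) <
      2 / (q + 2) := by
  have hq0 : (0:ℝ) < q := by linarith
  set f : ℝ → ℝ := fun t => t ^ q * (x + t) ^ q / (x + 2 * t) ^ (q - 1) with hf
  set u : ℝ → ℝ := fun t => t * (x + t) with hu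
  set D : ℝ → ℝ := fun t =>
      ((q + 1) * u t ^ (q + 1 - 1) * (x + 2 * t) * (x + 2 * t) ^ q -
        u t ^ (q + 1) * (q * (x + 2 * t) ^ (q - 1) * 2)) / ((x + 2 * t) ^ q) ^ 2 with hD
  -- derivative of g(t) = u(t)^(q+1) / (x+2t)^q is D
  have hderiv : ∀ t ∈ Set.uIcc (0:ℝ) 1,
      HasDerivAt (fun t => u t ^ (q + 1) / (x + 2 * t) ^ q) (D t) t := by
    intro t ht
    rw [Set.uIcc_of_le zero_le_one] at ht
    have hs : 0 < x + 2 * t := by nlinarith [ht.1]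
    have hu' : HasDerivAt u (x + 2 * t) t := by
      have h := (hasDerivAt_id' t).mul ((hasDerivAt_id' t).const_add x)
      exact h.congr_deriv (by ring)
    have hnum : HasDerivAt (fun t => u t ^ (q + 1))
        ((q + 1) * u t ^ (q + 1 - 1) * (x + 2 * t)) t := by
      have h1 : HasDerivAt (fun y : ℝ => y ^ (q + 1)) ((q + 1) * u t ^ (q + 1 - 1)) (u t) :=
        Real.hasDerivAt_rpow_const (Or.inr (by linarith))
      exact h1.comp t hu'
    have hden' : HasDerivAt (fun t : ℝ => x + 2 * t) 2 t := by
      exact (((hasDerivAt_id' t).const_mul 2).const_add x).congr_deriv (by ring)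
    have hden : HasDerivAt (fun t : ℝ => (x + 2 * t) ^ q)
        (q * (x + 2 * t) ^ (q - 1) * 2) t :=
      by have h := (Real.hasDerivAt_rpow_const (p := q) (Or.inl hs.ne')).comp t hden'; exact h
    exact hnum.div hden (by positivity)
  -- continuity and integrability
  have hsc : ∀ t ∈ Set.Icc (0:ℝ) 1, 0 < x + 2 * t := by
    intro t ht; nlinarith [ht.1]
  have hfc : ContinuousOn f (Set.Icc 0 1) := by
    apply ContinuousOn.div
    · exact (continuousOn_id.rpow_const fun t _ => Or.inr hq0.le).mul
        (((continuousOn_const.add continuousOn_id)).rpow_const fun t _ => Or.inr hq0.le)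
    · exact (continuousOn_const.add (continuousOn_const.mul continuousOn_id)).rpow_const
        fun t ht => Or.inr (by linarith)
    · intro t ht
      exact (Real.rpow_pos_of_pos (hsc t ht) _).ne'
  have huc : ContinuousOn u (Set.Icc (0:ℝ) 1) :=
    continuousOn_id.mul (continuousOn_const.add continuousOn_id)
  have hsc' : ContinuousOn (fun t : ℝ => x + 2 * t) (Set.Icc (0:ℝ) 1) :=
    continuousOn_const.add (continuousOn_const.mul continuousOn_id)
  have hDc : ContinuousOn D (Set.Icc 0 1) := by
    apply ContinuousOn.div
    · exact (((continuousOn_const.mul (huc.rpow_const fun t _ => Or.inr (by linarith))).mul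
        hsc').mul (hsc'.rpow_const fun t _ => Or.inr hq0.le)).sub
        ((huc.rpow_const fun t _ => Or.inr (by linarith)).mul
          ((continuousOn_const.mul (hsc'.rpow_const fun t _ => Or.inr (by linarith))).mul
            continuousOn_const))
    · exact (hsc'.rpow_const fun t _ => Or.inr hq0.le).pow 2
    · intro t ht
      exact pow_ne_zero _ (Real.rpow_pos_of_pos (hsc t ht) _).ne'
  have hfint : IntervalIntegrable f volume 0 1 := by
    apply ContinuousOn.intervalIntegrable
    rwa [Set.uIcc_of_le zero_le_one]
  have hDint : IntervalIntegrable D volume 0 1 := by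
    apply ContinuousOn.intervalIntegrable
    rwa [Set.uIcc_of_le zero_le_one]
  -- FTC
  have hx1 : (0:ℝ) < x + 1 := by linarith
  have hx2 : (0:ℝ) < x + 2 := by linarith
  have hFTC : ∫ t in (0:ℝ)..1, D t = (x + 1) ^ (q + 1) / (x + 2) ^ q := by
    rw [intervalIntegral.integral_eq_sub_of_hasDerivAt hderiv hDint]
    simp only [hu]
    norm_num [Real.zero_rpow (show q + 1 ≠ 0 by positivity)]
  -- pointwise facts on Ioo 0 1
  have hkey : ∀ t ∈ Set.Ioo (0:ℝ) 1,
      D t / (q + 1) < f t ∧ f t < 2 * D t / (q + 2) := by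
    intro t ht
    obtain ⟨ht0, ht1⟩ := ht
    have hxt : 0 < x + t := by linarith
    have hs : 0 < x + 2 * t := by linarith
    have hv : 0 < u t := by simp only [hu]; positivity
    have hA : 0 < u t ^ q := Real.rpow_pos_of_pos hv q
    have hB : 0 < (x + 2 * t) ^ q := Real.rpow_pos_of_pos hs q
    have hft : f t = u t ^ q * (x + 2 * t) / (x + 2 * t) ^ q := by
      simp only [hf, hu]
      rw [← Real.mul_rpow ht0.le hxt.le, Real.rpow_sub_one hs.ne' q, div_div_eq_mul_div]
    have h1 : u t ^ (q + 1 - 1) = u t ^ q := by norm_num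
    have h2 : u t ^ (q + 1) = u t ^ q * u t := Real.rpow_add_one hv.ne' q
    have h3 : (x + 2 * t) ^ (q - 1) = (x + 2 * t) ^ q / (x + 2 * t) :=
      Real.rpow_sub_one hs.ne' q
    have hP : 0 < u t ^ q / ((x + 2 * t) ^ q * (x + 2 * t)) := by positivity
    have hDt : D t = (u t ^ q / ((x + 2 * t) ^ q * (x + 2 * t))) *
        ((q + 1) * (x + 2 * t) ^ 2 - 2 * q * u t) := by
      simp only [hD, h1, h2, h3]
      field_simp
    have hft' : f t = (u t ^ q / ((x + 2 * t) ^ q * (x + 2 * t))) * (x + 2 * t) ^ 2 := by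
      rw [hft]
      field_simp
    have hx2t : (x + 2 * t) ^ 2 - 4 * u t = x ^ 2 := by simp only [hu]; ring
    set P : ℝ := u t ^ q / ((x + 2 * t) ^ q * (x + 2 * t)) with hPdef
    constructor
    · rw [hft', hDt, div_lt_iff₀ (by linarith : (0:ℝ) < q + 1)]
      nlinarith [mul_pos hP hv, mul_pos (mul_pos hP hv) hq0]
    · rw [hft', hDt, lt_div_iff₀ (by linarith : (0:ℝ) < q + 2)]
      have key : P * q * ((x + 2 * t) ^ 2 - 4 * u t) = P * q * x ^ 2 := by rw [hx2t]
      nlinarith [key, mul_pos (mul_pos hP hq0) (mul_pos hx hx)]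
  -- integral inequalities
  have hlow : (x + 1) ^ (q + 1) / (x + 2) ^ q / (q + 1) < ∫ t in (0:ℝ)..1, f t := by
    have hpos : 0 < ∫ t in (0:ℝ)..1, (f t - D t / (q + 1)) := by
      apply intervalIntegral_pos_of_pos_on
      · exact hfint.sub (hDint.div_const _)
      · intro t ht
        have := (hkey t ht).1
        linarith
      · norm_num
    rw [intervalIntegral.integral_sub hfint (hDint.div_const _),
      intervalIntegral.integral_div, hFTC] at hpos
    linarith
  have hup : (∫ t in (0:ℝ)..1, f t) < 2 * ((x + 1) ^ (q + 1) / (x + 2) ^ q) / (q + 2) := by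
    have hpos : 0 < ∫ t in (0:ℝ)..1, (2 * D t / (q + 2) - f t) := by
      apply intervalIntegral_pos_of_pos_on
      · exact (((hDint.const_mul 2).div_const _)).sub hfint
      · intro t ht
        have := (hkey t ht).2
        linarith
      · norm_num
    rw [intervalIntegral.integral_sub ((hDint.const_mul 2).div_const _) hfint,
      intervalIntegral.integral_div, intervalIntegral.integral_const_mul, hFTC] at hpos
    linarith
  -- conclude
  have hC : (0:ℝ) < (x + 2) ^ q / (x + 1) ^ (q + 1) := by positivity
  have hCg : (x + 2) ^ q / (x + 1) ^ (q + 1) * ((x + 1) ^ (q + 1) / (x + 2) ^ q) = 1 := by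
    rw [div_mul_div_comm, mul_comm ((x+2)^q)]
    exact div_self (by positivity)
  constructor
  · have := mul_lt_mul_of_pos_left hlow hC
    calc 1 / (q + 1) = (x + 2) ^ q / (x + 1) ^ (q + 1) *
          ((x + 1) ^ (q + 1) / (x + 2) ^ q / (q + 1)) := by
          rw [mul_div_assoc' _ _ (q+1), hCg]
      _ < _ := this
  · have := mul_lt_mul_of_pos_left hup hC
    calc ((x + 2) ^ q / (x + 1) ^ (q + 1)) * ∫ t in (0:ℝ)..1, f t
        < (x + 2) ^ q / (x + 1) ^ (q + 1) *
          (2 * ((x + 1) ^ (q + 1) / (x + 2) ^ q) / (q + 2)) := this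
      _ = 2 / (q + 2) := by
          rw [mul_div_assoc' _ _ (q+2), ← mul_assoc, mul_comm (_ / _) 2, mul_assoc, hCg, mul_one]
end

section
/- For every real q > 1 and every y > 0, one has y^{q+1}/2^{q-1} + ((q+1)/((q+2)·2^{q-1})) · y^q < y^q (1+y)^q / (1+2y)^{q-1} < ((q+2)/(q+1)) · y^{q+1} + y^q. -/
open Real

/-- For `0 < p` and `0 < t < 1`, `(1-t)^p * (1+p*t) < 1`. -/
lemma aux_one_sub_rpow {p t : ℝ} (hp : 0 < p) (ht : 0 < t) (ht1 : t < 1) :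
    (1 - t) ^ p * (1 + p * t) < 1 := by
  have h1 : (0:ℝ) < 1 - t := by linarith
  have hlog : Real.log (1 - t) < -t := by
    have := Real.log_lt_sub_one_of_pos h1 (by intro h; rw [sub_eq_iff_eq_add] at h; linarith)
    linarith
  have h2 : (1 - t) ^ p = Real.exp (p * Real.log (1 - t)) := by
    rw [Real.rpow_def_of_pos h1, mul_comm]
  have h3 : (1 - t) ^ p < Real.exp (-(p * t)) := by
    rw [h2]
    exact Real.exp_lt_exp.mpr (by nlinarith)
  have h4 : 1 + p * t < Real.exp (p * t) := by
    have := Real.add_one_lt_exp (x := p * t) (by positivity)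
    linarith
  have h5 : Real.exp (-(p * t)) * Real.exp (p * t) = 1 := by
    rw [← Real.exp_add]; simp
  have hpos : (0:ℝ) < 1 + p * t := by positivity
  calc (1 - t) ^ p * (1 + p * t) < Real.exp (-(p * t)) * Real.exp (p * t) := by
        apply mul_lt_mul' h3.le h4 hpos.le (Real.exp_pos _)
    _ = 1 := h5

set_option maxHeartbeats 1000000 in
theorem stmt_6 (q y : ℝ) (hq : 1 < q) (hy : 0 < y) :
    y ^ (q + 1) / 2 ^ (q - 1) + ((q + 1) / ((q + 2) * 2 ^ (q - 1))) * y ^ q <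
      y ^ q * (1 + y) ^ q / (1 + 2 * y) ^ (q - 1) ∧
    y ^ q * (1 + y) ^ q / (1 + 2 * y) ^ (q - 1) <
      ((q + 2) / (q + 1)) * y ^ (q + 1) + y ^ q := by
  have h2y : (0:ℝ) < 1 + 2 * y := by linarith
  have h1y : (0:ℝ) < 1 + y := by linarith
  have hA : (0:ℝ) < (1 + 2 * y) ^ (q - 1) := Real.rpow_pos_of_pos h2y _
  have hB : (0:ℝ) < (2:ℝ) ^ (q - 1) := Real.rpow_pos_of_pos two_pos _
  have hY : (0:ℝ) < y ^ q := Real.rpow_pos_of_pos hy _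
  have hP : (0:ℝ) < (1 + y) ^ q := Real.rpow_pos_of_pos h1y _
  have hyq1 : y ^ (q + 1) = y ^ q * y := by
    rw [Real.rpow_add hy, Real.rpow_one]
  have hAq : (1 + 2 * y) ^ q = (1 + 2 * y) ^ (q - 1) * (1 + 2 * y) := by
    rw [← Real.rpow_add_one h2y.ne']; ring_nf
  have hBq : (2:ℝ) ^ q = (2:ℝ) ^ (q - 1) * 2 := by
    rw [← Real.rpow_add_one two_ne_zero]; ring_nf
  set A := (1 + 2 * y) ^ (q - 1) with hAdef
  set B := (2:ℝ) ^ (q - 1) with hBdef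
  set Y := y ^ q with hYdef
  set P := (1 + y) ^ q with hPdef
  clear_value A B Y P
  have hq2 : (0:ℝ) < q + 2 := by linarith
  have hq1 : (0:ℝ) < q + 1 := by linarith
  constructor
  · -- lower bound
    have hs0 : (0:ℝ) < 1 / (1 + 2 * y) := by positivity
    have hbern : 1 + q * (1 / (1 + 2 * y)) < (1 + 1 / (1 + 2 * y)) ^ q :=
      one_add_mul_self_lt_rpow_one_add (by linarith) hs0.ne' hq
    have hsplit : (2 * (1 + y)) ^ q = (1 + 2 * y) ^ q * (1 + 1 / (1 + 2 * y)) ^ q := by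
      rw [← Real.mul_rpow h2y.le (by positivity)]
      congr 1
      field_simp
      ring
    have h2P : (2 * (1 + y)) ^ q = 2 ^ q * P := by
      rw [Real.mul_rpow (by norm_num) h1y.le, hPdef]
    have hkey : A * (1 + 2 * y + q) < 2 * B * P := by
      have h6 : (1 + 2 * y) ^ q * (1 + q * (1 / (1 + 2 * y))) <
          (1 + 2 * y) ^ q * (1 + 1 / (1 + 2 * y)) ^ q :=
        mul_lt_mul_of_pos_left hbern (Real.rpow_pos_of_pos h2y _)
      have h7 : (1 + 2 * y) ^ q * (1 + q * (1 / (1 + 2 * y))) = A * (1 + 2 * y + q) := by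
        rw [hAq]
        field_simp
      rw [h7, ← hsplit, h2P, hBq] at h6
      linarith
    rw [lt_div_iff₀ hA, hyq1]
    have hLHS : (Y * y / B + (q + 1) / ((q + 2) * B) * Y) * A
        = A * Y * ((q + 2) * y + (q + 1)) / ((q + 2) * B) := by
      field_simp
    rw [hLHS, div_lt_iff₀ (by positivity)]
    have h8 : Y * (q + 2) * (A * (1 + 2 * y + q)) < Y * (q + 2) * (2 * B * P) :=
      mul_lt_mul_of_pos_left hkey (by positivity)
    have h9 : (0:ℝ) ≤ Y * A * (q ^ 2 + q) := by positivity
    linarith [h8, h9]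
  · -- upper bound
    have ht : (0:ℝ) < y / (1 + 2 * y) := by positivity
    have ht1 : y / (1 + 2 * y) < 1 := by
      rw [div_lt_one h2y]; linarith
    have haux := aux_one_sub_rpow (p := q - 1) (t := y / (1 + 2 * y)) (by linarith) ht ht1
    have e1 : 1 - y / (1 + 2 * y) = (1 + y) / (1 + 2 * y) := by
      field_simp; ring
    have e2 : 1 + (q - 1) * (y / (1 + 2 * y)) = (1 + (q + 1) * y) / (1 + 2 * y) := by
      field_simp; ring
    have e3 : ((1 + y) / (1 + 2 * y)) ^ (q - 1) = (1 + y) ^ (q - 1) / A := by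
      rw [Real.div_rpow h1y.le h2y.le, ← hAdef]
    rw [e1, e2, e3] at haux
    have hPe : P = (1 + y) ^ (q - 1) * (1 + y) := by
      rw [hPdef, ← Real.rpow_add_one h1y.ne']; ring_nf
    have hQ : (0:ℝ) < (1 + y) ^ (q - 1) := Real.rpow_pos_of_pos h1y _
    have hqy : (0:ℝ) < 1 + (q + 1) * y := by nlinarith
    have hkey2 : (1 + y) ^ (q - 1) * (1 + (q + 1) * y) < A * (1 + 2 * y) := by
      rw [div_mul_div_comm, div_lt_one (by positivity)] at haux
      linarith
    have hfinal : P * (1 + (q + 1) * y) < A * (1 + 2 * y) * (1 + y) := by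
      rw [hPe]
      calc (1 + y) ^ (q - 1) * (1 + y) * (1 + (q + 1) * y)
          = (1 + y) ^ (q - 1) * (1 + (q + 1) * y) * (1 + y) := by ring
        _ < A * (1 + 2 * y) * (1 + y) := mul_lt_mul_of_pos_right hkey2 h1y
    rw [div_lt_iff₀ hA, hyq1]
    -- goal: Y * P < ((q+2)/(q+1) * (Y*y) + Y) * A
    have hRHS : ((q + 2) / (q + 1) * (Y * y) + Y) * A
        = ((q + 2) * y + (q + 1)) * Y * A / (q + 1) := by
      field_simp [hA.ne']
    rw [hRHS, lt_div_iff₀ hq1]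
    have h1 : Y * (P * (1 + (q + 1) * y)) < Y * (A * (1 + 2 * y) * (1 + y)) :=
      mul_lt_mul_of_pos_left hfinal hY
    have hpoly : (1 + 2 * y) * (1 + y) * (q + 1) ≤
        (1 + (q + 1) * y) * ((q + 2) * y + (q + 1)) := by
      nlinarith [mul_nonneg hy.le (sq_nonneg q),
        mul_nonneg (mul_nonneg hy.le hy.le) (by nlinarith : (0:ℝ) ≤ q * (q + 1))]
    have h1' := mul_lt_mul_of_pos_right h1 hq1
    have h2' := mul_le_mul_of_nonneg_left hpoly (mul_pos hY hA).le
    have h3 : (Y * P * (q + 1)) * (1 + (q + 1) * y) <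
        (((q + 2) * y + (q + 1)) * Y * A) * (1 + (q + 1) * y) := by
      linarith [h1', h2']
    exact lt_of_mul_lt_mul_right h3 hqy.le
end

section
/- For every real q > 1 and every y > 0, one has (y^{q+2} + y^{q+1})/((q+2)·2^{q-1}) < ∫₀^y s^q(1+s)^q/(1+2s)^{q-1} ds < (y^{q+2} + y^{q+1})/(q+1). -/
open Real

lemma cont_rpow_aux (q : ℝ) (hq : 0 < q) : Continuous (fun s : ℝ => s ^ q) := by
  rw [continuous_iff_continuousAt]
  intro x
  exact Real.continuousAt_rpow_const x q (Or.inr hq.le)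

lemma key_pointwise (q s : ℝ) (hq : 1 < q) (hs : 0 ≤ s) :
    (s ^ q + s ^ (q + 1)) / 2 ^ (q - 1) ≤ s ^ q * (1 + s) ^ q / (1 + 2 * s) ^ (q - 1) ∧
    s ^ q * (1 + s) ^ q / (1 + 2 * s) ^ (q - 1) ≤ s ^ (q + 1) + s ^ q := by
  have h1 : (0:ℝ) < 1 + s := by linarith
  have h2 : (0:ℝ) < 1 + 2 * s := by linarith
  have hq1 : (0:ℝ) ≤ q - 1 := by linarith
  have hsum : s ^ (q + 1) = s ^ q * s := by
    rw [Real.rpow_add' hs (by linarith), Real.rpow_one]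
  have h3 : (1 + s) ^ q = (1 + s) * (1 + s) ^ (q - 1) := by
    nth_rewrite 1 [show q = 1 + (q - 1) by ring]
    rw [Real.rpow_add h1, Real.rpow_one]
  have hfeq : s ^ q * (1 + s) ^ q / (1 + 2 * s) ^ (q - 1)
      = s ^ q * (1 + s) * ((1 + s) / (1 + 2 * s)) ^ (q - 1) := by
    rw [Real.div_rpow h1.le h2.le, h3]
    ring
  have hr1 : ((1 + s) / (1 + 2 * s)) ^ (q - 1) ≤ 1 := by
    apply Real.rpow_le_one (by positivity) _ hq1
    rw [div_le_one h2]; linarith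
  have hr2 : (2 ^ (q - 1) : ℝ)⁻¹ ≤ ((1 + s) / (1 + 2 * s)) ^ (q - 1) := by
    rw [← Real.inv_rpow (by norm_num : (0:ℝ) ≤ 2)]
    apply Real.rpow_le_rpow (by norm_num) _ hq1
    rw [le_div_iff₀ h2]; linarith
  have hmul : 0 ≤ s ^ q * (1 + s) := by positivity
  constructor
  · have : (s ^ q + s ^ (q + 1)) / 2 ^ (q - 1)
        = s ^ q * (1 + s) * (2 ^ (q - 1) : ℝ)⁻¹ := by
      rw [hsum]; field_simp
    rw [this, hfeq]
    exact mul_le_mul_of_nonneg_left hr2 hmul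
  · have : s ^ (q + 1) + s ^ q = s ^ q * (1 + s) * 1 := by rw [hsum]; ring
    rw [this, hfeq]
    exact mul_le_mul_of_nonneg_left hr1 hmul

theorem stmt_7 (q y : ℝ) (hq : 1 < q) (hy : 0 < y) :
    (y ^ (q + 2) + y ^ (q + 1)) / ((q + 2) * 2 ^ (q - 1)) <
      (∫ s in (0:ℝ)..y, s ^ q * (1 + s) ^ q / (1 + 2 * s) ^ (q - 1)) ∧
    (∫ s in (0:ℝ)..y, s ^ q * (1 + s) ^ q / (1 + 2 * s) ^ (q - 1)) <
      (y ^ (q + 2) + y ^ (q + 1)) / (q + 1) := by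
  have hq0 : (0:ℝ) < q := by linarith
  have hcf : Continuous fun s : ℝ => s ^ q := cont_rpow_aux q hq0
  have hcf1 : Continuous fun s : ℝ => s ^ (q + 1) := cont_rpow_aux (q+1) (by linarith)
  have hc1 : Continuous fun s : ℝ => (1 + s) ^ q :=
    (cont_rpow_aux q hq0).comp (continuous_const.add continuous_id)
  have hc2 : Continuous fun s : ℝ => (1 + 2 * s) ^ (q - 1) :=
    (cont_rpow_aux (q - 1) (by linarith)).comp
      (continuous_const.add (continuous_const.mul continuous_id))
  have huIcc : Set.uIcc (0:ℝ) y = Set.Icc 0 y := Set.uIcc_of_le hy.le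
  have hfint : IntervalIntegrable
      (fun s => s ^ q * (1 + s) ^ q / (1 + 2 * s) ^ (q - 1))
      MeasureTheory.volume 0 y := by
    apply ContinuousOn.intervalIntegrable
    apply ContinuousOn.div ((hcf.mul hc1).continuousOn) (hc2.continuousOn)
    intro x hx
    rw [huIcc] at hx
    have hx2 : (0:ℝ) < 1 + 2 * x := by nlinarith [hx.1]
    exact ne_of_gt (Real.rpow_pos_of_pos hx2 _)
  have hint1 : IntervalIntegrable (fun s : ℝ => s ^ q) MeasureTheory.volume 0 y :=
    hcf.intervalIntegrable 0 y
  have hint2 : IntervalIntegrable (fun s : ℝ => s ^ (q + 1)) MeasureTheory.volume 0 y :=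
    hcf1.intervalIntegrable 0 y
  have hA : (∫ s in (0:ℝ)..y, s ^ q) = y ^ (q + 1) / (q + 1) := by
    rw [integral_rpow (Or.inl (by linarith)), Real.zero_rpow (by linarith : q + 1 ≠ 0)]
    ring
  have hB : (∫ s in (0:ℝ)..y, s ^ (q + 1)) = y ^ (q + 2) / (q + 2) := by
    rw [integral_rpow (Or.inl (by linarith)), Real.zero_rpow (by linarith : q + 1 + 1 ≠ 0)]
    rw [show q + 1 + 1 = q + 2 by ring]
    ring
  have hy1 : (0:ℝ) < y ^ (q + 1) := Real.rpow_pos_of_pos hy _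
  have hy2 : (0:ℝ) < y ^ (q + 2) := Real.rpow_pos_of_pos hy _
  have ht : (0:ℝ) < 2 ^ (q - 1) := Real.rpow_pos_of_pos (by norm_num) _
  constructor
  · have hmono : (∫ s in (0:ℝ)..y, (s ^ q + s ^ (q + 1)) / 2 ^ (q - 1))
        ≤ ∫ s in (0:ℝ)..y, s ^ q * (1 + s) ^ q / (1 + 2 * s) ^ (q - 1) := by
      apply intervalIntegral.integral_mono_on hy.le _ hfint
      · intro x hx
        exact (key_pointwise q x hq hx.1).1
      · exact ((hcf.add hcf1).div_const _).intervalIntegrable 0 y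
    have hcalc : (∫ s in (0:ℝ)..y, (s ^ q + s ^ (q + 1)) / 2 ^ (q - 1))
        = (y ^ (q + 1) / (q + 1) + y ^ (q + 2) / (q + 2)) / 2 ^ (q - 1) := by
      rw [intervalIntegral.integral_div, intervalIntegral.integral_add hint1 hint2, hA, hB]
    rw [hcalc] at hmono
    have h1 : (0:ℝ) < q + 1 := by linarith
    have h2 : (0:ℝ) < q + 2 := by linarith
    have e1 : (y ^ (q + 2) + y ^ (q + 1)) / ((q + 2) * 2 ^ (q - 1))
        = (y ^ (q + 2) / (q + 2) + y ^ (q + 1) / (q + 2)) / 2 ^ (q - 1) := by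
      field_simp
    have e2 : y ^ (q + 1) / (q + 1) + y ^ (q + 2) / (q + 2)
        = y ^ (q + 2) / (q + 2) + y ^ (q + 1) / (q + 1) := by ring
    rw [e2] at hmono
    rw [e1]
    refine lt_of_lt_of_le ?_ hmono
    have hlt : y ^ (q + 1) / (q + 2) < y ^ (q + 1) / (q + 1) :=
      div_lt_div_of_pos_left hy1 h1 (by linarith)
    rw [div_eq_mul_inv, div_eq_mul_inv]
    exact mul_lt_mul_of_pos_right (by linarith) (inv_pos.mpr ht)
  · have hmono : (∫ s in (0:ℝ)..y, s ^ q * (1 + s) ^ q / (1 + 2 * s) ^ (q - 1))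
        ≤ ∫ s in (0:ℝ)..y, (s ^ (q + 1) + s ^ q) := by
      apply intervalIntegral.integral_mono_on hy.le hfint
      · exact (hcf1.add hcf).intervalIntegrable 0 y
      · intro x hx
        exact (key_pointwise q x hq hx.1).2
    have hcalc : (∫ s in (0:ℝ)..y, (s ^ (q + 1) + s ^ q))
        = y ^ (q + 2) / (q + 2) + y ^ (q + 1) / (q + 1) := by
      rw [intervalIntegral.integral_add hint2 hint1, hA, hB]
    rw [hcalc] at hmono
    refine lt_of_le_of_lt hmono ?_
    have h1 : (0:ℝ) < q + 1 := by linarith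
    have h2 : (0:ℝ) < q + 2 := by linarith
    rw [add_div]
    have hlt : y ^ (q + 2) / (q + 2) < y ^ (q + 2) / (q + 1) :=
      div_lt_div_of_pos_left hy2 h1 (by linarith)
    linarith
end

section
/- For every real q > 1 and every x > 0, the quantity G(x) := (1/(x+1)) · ∫₀¹ t^q (x+t)^q / (x+2t)^{q-1} dt satisfies 1/((q+2)·2^{q-1}) < G(x) < 1/(q+1). -/
open Real

theorem stmt_8 (q x : ℝ) (hq : 1 < q) (hx : 0 < x) :
    1 / ((q + 2) * 2 ^ (q - 1)) <
      (1 / (x + 1)) * (∫ t in (0:ℝ)..1, t ^ q * (x + t) ^ q / (x + 2 * t) ^ (q - 1)) ∧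
    (1 / (x + 1)) * (∫ t in (0:ℝ)..1, t ^ q * (x + t) ^ q / (x + 2 * t) ^ (q - 1)) <
      1 / (q + 1) := by
  have hq0 : 0 < q := by linarith
  have hq1 : (0:ℝ) ≤ q - 1 := by linarith
  set c : ℝ := (2:ℝ) ^ (q - 1) with hc
  have hcpos : 0 < c := rpow_pos_of_pos (by norm_num) _
  set f : ℝ → ℝ := fun t => t ^ q * (x + t) ^ q / (x + 2 * t) ^ (q - 1) with hfdef
  set g : ℝ → ℝ := fun t => t ^ q * (x + t) with hgdef
  have huIcc : Set.uIcc (0:ℝ) 1 = Set.Icc (0:ℝ) 1 := Set.uIcc_of_le (by norm_num)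
  -- continuity
  have hfc : ContinuousOn f (Set.Icc (0:ℝ) 1) := by
    apply ContinuousOn.div
    · exact (continuousOn_id.rpow_const (fun t ht => Or.inr hq0.le)).mul
        ((continuousOn_const.add continuousOn_id).rpow_const
          (fun t ht => Or.inr hq0.le))
    · exact (continuousOn_const.add (continuousOn_const.mul continuousOn_id)).rpow_const
        (fun t ht => Or.inl (by have := ht.1; show x + 2 * t ≠ 0; exact ne_of_gt (by linarith)))
    · intro t ht
      have h0 : (0:ℝ) < x + 2 * t := by have := ht.1; linarith
      exact (rpow_pos_of_pos h0 _).ne'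
  have hgc : ContinuousOn g (Set.Icc (0:ℝ) 1) :=
    (continuousOn_id.rpow_const (fun t ht => Or.inr hq0.le)).mul
      (continuousOn_const.add continuousOn_id)
  have hfi : IntervalIntegrable f MeasureTheory.volume 0 1 :=
    (huIcc ▸ hfc).intervalIntegrable
  have hgi : IntervalIntegrable g MeasureTheory.volume 0 1 :=
    (huIcc ▸ hgc).intervalIntegrable
  -- value of ∫ g
  have hJ : ∫ t in (0:ℝ)..1, g t = x / (q + 1) + 1 / (q + 2) := by
    have h1 : ∀ t ∈ Set.uIcc (0:ℝ) 1, g t = x * t ^ q + t ^ (q + 1) := by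
      intro t ht
      rw [huIcc] at ht
      rcases eq_or_lt_of_le ht.1 with h | h
      · simp [hgdef, ← h, Real.zero_rpow hq0.ne',
          Real.zero_rpow (by linarith : q + 1 ≠ 0)]
      · simp only [hgdef]
        rw [Real.rpow_add_one h.ne']
        ring
    rw [intervalIntegral.integral_congr h1,
      intervalIntegral.integral_add
        ((intervalIntegral.intervalIntegrable_rpow' (by linarith)).const_mul x)
        (intervalIntegral.intervalIntegrable_rpow' (by linarith)),
      intervalIntegral.integral_const_mul,
      integral_rpow (Or.inl (by linarith)), integral_rpow (Or.inl (by linarith))]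
    rw [Real.one_rpow, Real.one_rpow, Real.zero_rpow (by linarith : q + 1 ≠ 0),
      Real.zero_rpow (by linarith : q + 1 + 1 ≠ 0)]
    ring
  -- pointwise bounds on [0,1]
  have hub : ∀ t ∈ Set.Icc (0:ℝ) 1, f t ≤ g t := by
    intro t ht
    have ht0 : 0 ≤ t := ht.1
    have hxt : (0:ℝ) < x + t := by linarith
    have hxt2 : (0:ℝ) < x + 2 * t := by linarith
    have hden : (0:ℝ) < (x + 2 * t) ^ (q - 1) := rpow_pos_of_pos hxt2 _
    rw [hfdef]
    simp only
    rw [div_le_iff₀ hden]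
    have hsplit : (x + t) ^ q = (x + t) ^ (q - 1) * (x + t) := by
      rw [← Real.rpow_add_one hxt.ne' (q - 1)]
      norm_num
    have hmono : (x + t) ^ (q - 1) ≤ (x + 2 * t) ^ (q - 1) :=
      Real.rpow_le_rpow hxt.le (by linarith) hq1
    have htq : (0:ℝ) ≤ t ^ q := Real.rpow_nonneg ht0 _
    rw [hsplit]
    calc t ^ q * ((x + t) ^ (q - 1) * (x + t))
        ≤ t ^ q * ((x + 2 * t) ^ (q - 1) * (x + t)) := by
          apply mul_le_mul_of_nonneg_left _ htq
          exact mul_le_mul_of_nonneg_right hmono hxt.le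
      _ = g t * (x + 2 * t) ^ (q - 1) := by rw [hgdef]; ring
  have hlb : ∀ t ∈ Set.Icc (0:ℝ) 1, g t / c ≤ f t := by
    intro t ht
    have ht0 : 0 ≤ t := ht.1
    have hxt : (0:ℝ) < x + t := by linarith
    have hxt2 : (0:ℝ) < x + 2 * t := by linarith
    have hden : (0:ℝ) < (x + 2 * t) ^ (q - 1) := rpow_pos_of_pos hxt2 _
    have htq : (0:ℝ) ≤ t ^ q := Real.rpow_nonneg ht0 _
    rw [hfdef]
    simp only
    rw [div_le_div_iff₀ hcpos hden]
    have hsplit : (x + t) ^ q = (x + t) ^ (q - 1) * (x + t) := by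
      rw [← Real.rpow_add_one hxt.ne' (q - 1)]
      norm_num
    have hmono : (x + 2 * t) ^ (q - 1) ≤ (2 * (x + t)) ^ (q - 1) :=
      Real.rpow_le_rpow hxt2.le (by linarith) hq1
    have h2 : (2 * (x + t)) ^ (q - 1) = c * (x + t) ^ (q - 1) := by
      rw [hc, Real.mul_rpow (by norm_num) hxt.le]
    calc g t * (x + 2 * t) ^ (q - 1)
        ≤ g t * (2 * (x + t)) ^ (q - 1) := by
          apply mul_le_mul_of_nonneg_left hmono
          exact mul_nonneg htq hxt.le
      _ = t ^ q * (x + t) ^ q * c := by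
          rw [h2, hsplit, hgdef]; ring
  -- integral bounds
  set I : ℝ := ∫ t in (0:ℝ)..1, f t with hI
  have hIub : I ≤ x / (q + 1) + 1 / (q + 2) := by
    rw [← hJ]
    exact intervalIntegral.integral_mono_on (by norm_num) hfi hgi hub
  have hIlb : (x / (q + 1) + 1 / (q + 2)) / c ≤ I := by
    have : ∫ t in (0:ℝ)..1, g t / c = (x / (q + 1) + 1 / (q + 2)) / c := by
      rw [intervalIntegral.integral_div, hJ]
    rw [← this]
    exact intervalIntegral.integral_mono_on (by norm_num) (hgi.div_const c) hfi hlb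
  have hx1 : (0:ℝ) < x + 1 := by linarith
  have hq1p : (0:ℝ) < q + 1 := by linarith
  have hq2p : (0:ℝ) < q + 2 := by linarith
  have hkey : (x + 1) / (q + 2) < x / (q + 1) + 1 / (q + 2) := by
    rw [add_div]
    have : x / (q + 2) < x / (q + 1) := div_lt_div_of_pos_left hx hq1p (by linarith)
    linarith
  constructor
  · -- lower bound
    have step : 1 / ((q + 2) * c) < (1 / (x + 1)) * ((x / (q + 1) + 1 / (q + 2)) / c) := by
      rw [div_mul_div_comm, one_mul, div_lt_div_iff₀ (by positivity) (by positivity)]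
      have h1 : x + 1 < (x / (q + 1) + 1 / (q + 2)) * (q + 2) := by
        rw [← div_lt_iff₀ hq2p]
        exact hkey
      nlinarith [mul_lt_mul_of_pos_right h1 hcpos]
    calc 1 / ((q + 2) * c) < (1 / (x + 1)) * ((x / (q + 1) + 1 / (q + 2)) / c) := step
      _ ≤ (1 / (x + 1)) * I :=
          mul_le_mul_of_nonneg_left hIlb (by positivity)
  · -- upper bound
    have hkey2 : x / (q + 1) + 1 / (q + 2) < (x + 1) / (q + 1) := by
      rw [add_div]
      have : 1 / (q + 2) < 1 / (q + 1) := by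
        apply one_div_lt_one_div_of_lt hq1p; linarith
      linarith
    calc (1 / (x + 1)) * I
        ≤ (1 / (x + 1)) * (x / (q + 1) + 1 / (q + 2)) :=
          mul_le_mul_of_nonneg_left hIub (by positivity)
      _ < (1 / (x + 1)) * ((x + 1) / (q + 1)) :=
          mul_lt_mul_of_pos_left hkey2 (by positivity)
      _ = 1 / (q + 1) := by field_simp
end

section
/- Let q > 1 and let Ω^ℓ = (−ℓ/2, ℓ/2) × (−1, 1) be a rectangle, ℓ > 0. For the web torsion w(ℓ) := ∫₀¹ |Ω^ℓ_t|^q / |∂Ω^ℓ_t|^{q−1} dt, where Ω^ℓ_t = (−ℓ/2+t, ℓ/2−t) × (−1+t, 1−t) has area (ℓ−2t)(2−2t) and perimeter 2(ℓ−2t)+2(2−2t) when ℓ ≥ 2, one has lim_{ℓ→∞} (q+1)·w(ℓ)/(2ℓ) = 1. -/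
open Real Filter
set_option maxHeartbeats 1000000 in

theorem stmt_13 (q : ℝ) (hq : 1 < q)
    (w : ℝ → ℝ)
    (hw : w = fun ℓ : ℝ =>
      ∫ t in (0:ℝ)..1,
        ((ℓ - 2 * t) * (2 - 2 * t)) ^ q /
          (2 * (ℓ - 2 * t) + 2 * (2 - 2 * t)) ^ (q - 1)) :
    Tendsto (fun ℓ : ℝ => (q + 1) * w ℓ / (2 * ℓ)) atTop (nhds 1) := by
  subst hw
  have hq0 : (0:ℝ) ≤ q := by linarith
  have hq1 : (0:ℝ) ≤ q - 1 := by linarith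
  have hq2 : (0:ℝ) < q + 1 := by linarith
  have hrpow : Continuous fun x : ℝ => x ^ q := Real.continuous_rpow_const hq0
  have hrpow1 : Continuous fun x : ℝ => x ^ (q-1) := Real.continuous_rpow_const hq1
  -- the model integral
  have hC : ∫ t in (0:ℝ)..1, (2 - 2*t) ^ q = 2 ^ q / (q+1) := by
    have hder : ∀ t ∈ Set.uIcc (0:ℝ) 1,
        HasDerivAt (fun t : ℝ => -(2-2*t)^(q+1)/(2*(q+1))) ((2-2*t)^q) t := by
      intro t _
      have h1 : HasDerivAt (fun t:ℝ => 2-2*t) (-2) t := by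
        simpa using ((hasDerivAt_id t).const_mul (2:ℝ)).const_sub 2
      have h2 := (Real.hasDerivAt_rpow_const (x := 2-2*t) (p := q+1)
        (Or.inr (by linarith))).comp t h1
      have h3 : HasDerivAt (fun t : ℝ => -(2-2*t)^(q+1)/(2*(q+1)))
          (-((q + 1) * (2 - 2 * t) ^ (q + 1 - 1) * -2) / (2 * (q + 1))) t :=
        (h2.neg).div_const (2*(q+1))
      convert h3 using 1
      have hh : q + 1 - 1 = q := by ring
      rw [hh]
      field_simp
      try ring
    rw [intervalIntegral.integral_eq_sub_of_hasDerivAt hder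
      ((hrpow.comp (by continuity)).continuousOn.intervalIntegrable)]
    have h21 : (2:ℝ) - 2*1 = 0 := by norm_num
    have h20 : (2:ℝ) - 2*0 = 2 := by norm_num
    rw [h21, h20, Real.zero_rpow (by linarith),
      show q + 1 = q + 1 by rfl]
    have : (2:ℝ) ^ (q+1) = 2 ^ q * 2 := by
      rw [Real.rpow_add (by norm_num), Real.rpow_one]
    rw [this]
    field_simp
    ring
  -- bounds for the integral
  have key : ∀ ℓ : ℝ, 3 ≤ ℓ →
      (ℓ-2)^q / (2*ℓ+4)^(q-1) * (2^q/(q+1)) ≤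
        (∫ t in (0:ℝ)..1, ((ℓ - 2 * t) * (2 - 2 * t)) ^ q /
          (2 * (ℓ - 2 * t) + 2 * (2 - 2 * t)) ^ (q - 1)) ∧
      (∫ t in (0:ℝ)..1, ((ℓ - 2 * t) * (2 - 2 * t)) ^ q /
          (2 * (ℓ - 2 * t) + 2 * (2 - 2 * t)) ^ (q - 1)) ≤
        ℓ^q / (2*ℓ-4)^(q-1) * (2^q/(q+1)) := by
    intro ℓ hℓ
    have hden_pos : ∀ t ∈ Set.Icc (0:ℝ) 1, 0 < 2 * (ℓ - 2 * t) + 2 * (2 - 2 * t) := by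
      intro t ht
      obtain ⟨ht0, ht1⟩ := ht
      nlinarith
    have hfint : IntervalIntegrable (fun t => ((ℓ - 2 * t) * (2 - 2 * t)) ^ q /
        (2 * (ℓ - 2 * t) + 2 * (2 - 2 * t)) ^ (q - 1)) MeasureTheory.volume 0 1 := by
      apply ContinuousOn.intervalIntegrable
      apply ContinuousOn.div
      · exact (hrpow.comp (by continuity)).continuousOn
      · exact (hrpow1.comp (by continuity)).continuousOn
      · intro t ht
        rw [Set.uIcc_of_le (by norm_num : (0:ℝ) ≤ 1)] at ht
        exact (Real.rpow_pos_of_pos (hden_pos t ht) _).ne'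
    constructor
    · have hmono : ∀ t ∈ Set.Icc (0:ℝ) 1,
          (ℓ-2)^q * (2-2*t)^q / (2*ℓ+4)^(q-1) ≤
          ((ℓ - 2 * t) * (2 - 2 * t)) ^ q /
            (2 * (ℓ - 2 * t) + 2 * (2 - 2 * t)) ^ (q - 1) := by
        intro t ht
        obtain ⟨ht0, ht1⟩ := ht
        have hB : (0:ℝ) ≤ 2 - 2*t := by linarith
        have hbase1 : (0:ℝ) ≤ (ℓ-2) * (2-2*t) := by nlinarith
        have h1 : (ℓ-2)^q * (2-2*t)^q ≤ ((ℓ - 2 * t) * (2 - 2 * t)) ^ q := by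
          rw [← Real.mul_rpow (by linarith) hB]
          exact Real.rpow_le_rpow hbase1 (by nlinarith) hq0
        apply div_le_div₀ (Real.rpow_nonneg (by nlinarith) _) h1
          (Real.rpow_pos_of_pos (hden_pos t ⟨ht0, ht1⟩) _)
        exact Real.rpow_le_rpow (le_of_lt (hden_pos t ⟨ht0, ht1⟩)) (by linarith) hq1
      have hlowint : IntervalIntegrable
          (fun t => (ℓ-2)^q * (2-2*t)^q / (2*ℓ+4)^(q-1)) MeasureTheory.volume 0 1 :=
        ((continuous_const.mul
          (hrpow.comp (by continuity : Continuous fun t : ℝ => 2-2*t))).div_const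
          _).intervalIntegrable 0 1
      have hint := intervalIntegral.integral_mono_on (by norm_num : (0:ℝ) ≤ 1)
        hlowint hfint hmono
      have heq : (∫ t in (0:ℝ)..1, (ℓ-2)^q * (2-2*t)^q / (2*ℓ+4)^(q-1))
          = (ℓ-2)^q / (2*ℓ+4)^(q-1) * (2^q/(q+1)) := by
        have hr : ∀ t : ℝ, (ℓ-2)^q * (2-2*t)^q / (2*ℓ+4)^(q-1)
            = ((ℓ-2)^q / (2*ℓ+4)^(q-1)) * (2-2*t)^q := fun t => by ring
        simp_rw [hr]
        rw [intervalIntegral.integral_const_mul, hC]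
      rw [← heq]
      exact hint
    · have hmono : ∀ t ∈ Set.Icc (0:ℝ) 1,
          ((ℓ - 2 * t) * (2 - 2 * t)) ^ q /
            (2 * (ℓ - 2 * t) + 2 * (2 - 2 * t)) ^ (q - 1) ≤
          ℓ^q * (2-2*t)^q / (2*ℓ-4)^(q-1) := by
        intro t ht
        obtain ⟨ht0, ht1⟩ := ht
        have hB : (0:ℝ) ≤ 2 - 2*t := by linarith
        have h1 : ((ℓ - 2 * t) * (2 - 2 * t)) ^ q ≤ ℓ^q * (2-2*t)^q := by
          rw [← Real.mul_rpow (by linarith) hB]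
          exact Real.rpow_le_rpow (by nlinarith) (by nlinarith) hq0
        apply div_le_div₀ (by positivity) h1
          (Real.rpow_pos_of_pos (by linarith) _)
        exact Real.rpow_le_rpow (by linarith) (by linarith) hq1
      have hupint : IntervalIntegrable
          (fun t => ℓ^q * (2-2*t)^q / (2*ℓ-4)^(q-1)) MeasureTheory.volume 0 1 :=
        ((continuous_const.mul
          (hrpow.comp (by continuity : Continuous fun t : ℝ => 2-2*t))).div_const
          _).intervalIntegrable 0 1
      have hint := intervalIntegral.integral_mono_on (by norm_num : (0:ℝ) ≤ 1)
        hfint hupint hmono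
      have heq : (∫ t in (0:ℝ)..1, ℓ^q * (2-2*t)^q / (2*ℓ-4)^(q-1))
          = ℓ^q / (2*ℓ-4)^(q-1) * (2^q/(q+1)) := by
        have hr : ∀ t : ℝ, ℓ^q * (2-2*t)^q / (2*ℓ-4)^(q-1)
            = (ℓ^q / (2*ℓ-4)^(q-1)) * (2-2*t)^q := fun t => by ring
        simp_rw [hr]
        rw [intervalIntegral.integral_const_mul, hC]
      rw [← heq]
      exact hint
  -- squeeze
  have hLo : Tendsto (fun ℓ : ℝ =>
      ((2*ℓ-4)/(2*ℓ+4))^(q-1) * ((ℓ-2)/ℓ)) atTop (nhds 1) := by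
    have h1 : Tendsto (fun ℓ : ℝ => (2*ℓ-4)/(2*ℓ+4)) atTop (nhds 1) := by
      have ht : Tendsto (fun ℓ : ℝ => 2*ℓ+4) atTop atTop :=
        tendsto_atTop_add_const_right _ 4 (tendsto_id.const_mul_atTop two_pos)
      have h0 : Tendsto (fun ℓ : ℝ => 1 - 8/(2*ℓ+4)) atTop (nhds (1 - 0)) :=
        tendsto_const_nhds.sub (Tendsto.div_atTop tendsto_const_nhds ht)
      rw [sub_zero] at h0
      refine h0.congr' ?_
      filter_upwards [eventually_ge_atTop (3:ℝ)] with ℓ hℓ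
      have : (2*ℓ+4) ≠ 0 := by linarith
      field_simp
      try ring
    have h2 : Tendsto (fun ℓ : ℝ => (ℓ-2)/ℓ) atTop (nhds 1) := by
      have ht : Tendsto (fun ℓ : ℝ => ℓ) atTop atTop := tendsto_id
      have h0 : Tendsto (fun ℓ : ℝ => 1 - 2/ℓ) atTop (nhds (1 - 0)) :=
        tendsto_const_nhds.sub (Tendsto.div_atTop tendsto_const_nhds ht)
      rw [sub_zero] at h0
      refine h0.congr' ?_
      filter_upwards [eventually_ge_atTop (3:ℝ)] with ℓ hℓ
      have : ℓ ≠ 0 := by linarith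
      field_simp
    have := (h1.rpow_const (Or.inr hq1)).mul h2
    simpa using this
  have hHi : Tendsto (fun ℓ : ℝ => ((2*ℓ)/(2*ℓ-4))^(q-1)) atTop (nhds 1) := by
    have h1 : Tendsto (fun ℓ : ℝ => (2*ℓ)/(2*ℓ-4)) atTop (nhds 1) := by
      have ht : Tendsto (fun ℓ : ℝ => 2*ℓ-4) atTop atTop :=
        tendsto_atTop_add_const_right _ (-4) (tendsto_id.const_mul_atTop two_pos)
      have h0 : Tendsto (fun ℓ : ℝ => 1 + 4/(2*ℓ-4)) atTop (nhds (1 + 0)) :=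
        tendsto_const_nhds.add (Tendsto.div_atTop tendsto_const_nhds ht)
      rw [add_zero] at h0
      refine h0.congr' ?_
      filter_upwards [eventually_ge_atTop (3:ℝ)] with ℓ hℓ
      have : (2*ℓ-4) ≠ 0 := by linarith
      field_simp
      try ring
    have := h1.rpow_const (Or.inr hq1)
    simpa using this
  apply tendsto_of_tendsto_of_tendsto_of_le_of_le' hLo hHi
  · filter_upwards [eventually_ge_atTop (3:ℝ)] with ℓ hℓ
    have hkey := (key ℓ hℓ).1
    have hℓ0 : (0:ℝ) < ℓ := by linarith
    have heq : ((2*ℓ-4)/(2*ℓ+4))^(q-1) * ((ℓ-2)/ℓ)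
        = (q+1) * ((ℓ-2)^q / (2*ℓ+4)^(q-1) * (2^q/(q+1))) / (2*ℓ) := by
      have e1 : (ℓ-2:ℝ)^q = (ℓ-2)^(q-1) * (ℓ-2) := by
        rw [show q = (q-1)+1 by ring, Real.rpow_add (by linarith), Real.rpow_one]
        ring_nf
      have e2 : (2:ℝ)^q = 2^(q-1) * 2 := by
        rw [show q = (q-1)+1 by ring, Real.rpow_add (by norm_num), Real.rpow_one]
        ring_nf
      have e3 : ((2*ℓ-4)/(2*ℓ+4))^(q-1) = 2^(q-1) * (ℓ-2)^(q-1) / (2*ℓ+4)^(q-1) := by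
        rw [Real.div_rpow (by linarith) (by linarith),
          show (2*ℓ-4:ℝ) = 2*(ℓ-2) by ring,
          Real.mul_rpow (by norm_num) (by linarith)]
      rw [e3, e1, e2]
      have hne1 : ((2*ℓ+4:ℝ))^(q-1) ≠ 0 := (Real.rpow_pos_of_pos (by linarith) _).ne'
      field_simp
      try ring
    rw [heq]
    gcongr
  · filter_upwards [eventually_ge_atTop (3:ℝ)] with ℓ hℓ
    have hkey := (key ℓ hℓ).2
    have hℓ0 : (0:ℝ) < ℓ := by linarith
    have heq : ((2*ℓ)/(2*ℓ-4))^(q-1)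
        = (q+1) * (ℓ^q / (2*ℓ-4)^(q-1) * (2^q/(q+1))) / (2*ℓ) := by
      have e1 : (ℓ:ℝ)^q = ℓ^(q-1) * ℓ := by
        rw [show q = (q-1)+1 by ring, Real.rpow_add hℓ0, Real.rpow_one]
        ring_nf
      have e2 : (2:ℝ)^q = 2^(q-1) * 2 := by
        rw [show q = (q-1)+1 by ring, Real.rpow_add (by norm_num), Real.rpow_one]
        ring_nf
      have e3 : ((2*ℓ)/(2*ℓ-4))^(q-1) = 2^(q-1) * ℓ^(q-1) / (2*ℓ-4)^(q-1) := by
        rw [Real.div_rpow (by linarith) (by linarith),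
          Real.mul_rpow (by norm_num) (by linarith)]
      rw [e3, e1, e2]
      have hne1 : ((2*ℓ-4:ℝ))^(q-1) ≠ 0 := (Real.rpow_pos_of_pos (by linarith) _).ne'
      field_simp
      try ring
    rw [heq]
    gcongr
end

section
/- Let q = 2. The function x ↦ ((x+2)²/(x+1)³) · ∫₀¹ t²(x+t)²/(x+2t) dt is strictly decreasing on (0, ∞). -/
open Real Filter

lemma integral_eval (x : ℝ) (hx : 0 < x) :
    ∫ t in (0:ℝ)..1, t ^ 2 * (x + t) ^ 2 / (x + 2 * t)
      = 1/8 + x/4 + x^2/16 - x^3/16 + x^4/32 * (Real.log (x+2) - Real.log x) := by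
  have key : ∀ t ∈ Set.uIcc (0:ℝ) 1,
      HasDerivAt (fun t : ℝ => t^4/8 + x*t^3/4 + x^2*t^2/16 - x^3*t/16
          + x^4/32 * Real.log (x + 2*t))
        (t ^ 2 * (x + t) ^ 2 / (x + 2 * t)) t := by
    intro t ht
    rw [Set.uIcc_of_le (by norm_num : (0:ℝ) ≤ 1)] at ht
    have hpos : 0 < x + 2*t := by nlinarith [ht.1]
    have hlog : HasDerivAt (fun t : ℝ => Real.log (x + 2*t)) (2 / (x + 2*t)) t := by
      have h1 : HasDerivAt (fun t : ℝ => x + 2*t) 2 t := by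
        simpa using ((hasDerivAt_id t).const_mul 2).const_add x
      simpa using h1.log (ne_of_gt hpos)
    have h := (((((hasDerivAt_pow 4 t).div_const 8).add
        (((hasDerivAt_pow 3 t).const_mul x).div_const 4)).add
        (((hasDerivAt_pow 2 t).const_mul (x^2)).div_const 16)).sub
        (((hasDerivAt_id t).const_mul (x^3)).div_const 16)).add
        (hlog.const_mul (x^4/32))
    refine h.congr_deriv ?_
    field_simp
    ring
  have hint : IntervalIntegrable (fun t : ℝ => t ^ 2 * (x + t) ^ 2 / (x + 2 * t))
      MeasureTheory.volume 0 1 := by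
    apply ContinuousOn.intervalIntegrable
    apply ContinuousOn.div (by fun_prop) (by fun_prop)
    intro t ht
    rw [Set.uIcc_of_le (by norm_num : (0:ℝ) ≤ 1)] at ht
    nlinarith [ht.1]
  have := intervalIntegral.integral_eq_sub_of_hasDerivAt key hint
  rw [this]
  norm_num
  ring


noncomputable def gfun (x : ℝ) : ℝ :=
  2/(x+1) + 2/(3*x*(x+1)*(x+2)) - (Real.log (x+2) - Real.log x)

lemma gfun_deriv (x : ℝ) (hx : 0 < x) :
    HasDerivAt gfun (-4/(3*x^2*(x+1)^2*(x+2)^2)) x := by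
  have hx1 : x + 1 ≠ 0 := by positivity
  have hx2 : x + 2 ≠ 0 := by positivity
  have hx0 : x ≠ 0 := ne_of_gt hx
  have h1 : HasDerivAt (fun x : ℝ => 2/(x+1))
      ((0*(x+1) - 2*1)/(x+1)^2) x :=
    (hasDerivAt_const x 2).div ((hasDerivAt_id x).add_const 1) hx1
  have hden : HasDerivAt (fun x : ℝ => 3*x*(x+1)*(x+2))
      ((3*1*(x+1) + 3*x*1)*(x+2) + 3*x*(x+1)*1) x := by
    exact ((((hasDerivAt_id x).const_mul 3).mul ((hasDerivAt_id x).add_const 1)).mul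
      ((hasDerivAt_id x).add_const 2))
  have h2 : HasDerivAt (fun x : ℝ => 2/(3*x*(x+1)*(x+2)))
      ((0*(3*x*(x+1)*(x+2)) - 2*((3*1*(x+1) + 3*x*1)*(x+2) + 3*x*(x+1)*1))/(3*x*(x+1)*(x+2))^2) x :=
    (hasDerivAt_const x 2).div hden (ne_of_gt (by nlinarith [mul_pos (mul_pos (mul_pos (by norm_num : (0:ℝ)<3) hx) (by linarith : (0:ℝ)<x+1)) (by linarith : (0:ℝ)<x+2)] : (0:ℝ) < 3*x*(x+1)*(x+2)))
  have h3 : HasDerivAt (fun x : ℝ => Real.log (x+2)) (1/(x+2)) x := by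
    simpa using ((hasDerivAt_id x).add_const 2).log hx2
  have h4 : HasDerivAt Real.log x⁻¹ x := Real.hasDerivAt_log hx0
  have h := (h1.add h2).sub (h3.sub h4)
  refine h.congr_deriv ?_
  field_simp
  ring

lemma log_bound (x : ℝ) (hx : 0 < x) :
    Real.log (x+2) - Real.log x ≤ 2/(x+1) + 2/(3*x*(x+1)*(x+2)) := by
  have hanti : AntitoneOn gfun (Set.Ioi 0) := by
    apply antitoneOn_of_deriv_nonpos (convex_Ioi 0)
    · intro y hy
      exact (gfun_deriv y hy).continuousAt.continuousWithinAt
    · intro y hy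
      rw [interior_Ioi] at hy
      exact (gfun_deriv y hy).differentiableAt.differentiableWithinAt
    · intro y hy
      rw [interior_Ioi] at hy
      rw [(gfun_deriv y hy).deriv]
      have : (0:ℝ) < 3*y^2*(y+1)^2*(y+2)^2 := by
        have hy' : (0:ℝ) < y := hy
        positivity
      exact le_of_lt (div_neg_of_neg_of_pos (by norm_num) this)
  have htend : Tendsto gfun atTop (nhds 0) := by
    have hL : Tendsto (fun x : ℝ => Real.log (x+2) - Real.log x) atTop (nhds 0) := by
      have h1 : Tendsto (fun x : ℝ => 1 + 2/x) atTop (nhds 1) := by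
        have := (tendsto_inv_atTop_zero (𝕜 := ℝ)).const_mul 2
        have h := tendsto_const_nhds (α := ℝ) (x := (1:ℝ)) (f := atTop) |>.add this
        simpa [div_eq_mul_inv] using h
      have h2 : Tendsto (fun x : ℝ => Real.log (1 + 2/x)) atTop (nhds 0) := by
        have := (Real.continuousAt_log (by norm_num : (1:ℝ) ≠ 0)).tendsto.comp h1
        simpa [Function.comp_def] using this
      apply h2.congr'
      filter_upwards [eventually_gt_atTop (0:ℝ)] with y hy
      rw [show (1:ℝ) + 2/y = (y+2)/y by field_simp,
        Real.log_div (by positivity) (ne_of_gt hy)]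
    have hU1 : Tendsto (fun x : ℝ => 2/(x+1)) atTop (nhds 0) := by
      have := (tendsto_atTop_add_const_right atTop (1:ℝ) tendsto_id).inv_tendsto_atTop.const_mul 2
      simpa [div_eq_mul_inv] using this
    have hU2 : Tendsto (fun x : ℝ => 2/(3*x*(x+1)*(x+2))) atTop (nhds 0) := by
      have hp : Tendsto (fun x : ℝ => 3*x*(x+1)*(x+2)) atTop atTop := by
        apply Tendsto.atTop_mul_atTop₀
        apply Tendsto.atTop_mul_atTop₀
        · exact (tendsto_id.const_mul_atTop (by norm_num : (0:ℝ) < 3))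
        · exact tendsto_atTop_add_const_right atTop 1 tendsto_id
        · exact tendsto_atTop_add_const_right atTop 2 tendsto_id
      have := hp.inv_tendsto_atTop.const_mul 2
      simpa [div_eq_mul_inv] using this
    have := (hU1.add hU2).sub hL
    show Tendsto (fun x => gfun x) atTop (nhds 0)
    simpa [gfun] using this
  have h0 : 0 ≤ gfun x := by
    apply le_of_tendsto htend
    filter_upwards [eventually_ge_atTop x, eventually_gt_atTop (0:ℝ)] with y hy hy0
    exact hanti hx hy0 hy
  have := h0
  unfold gfun at this
  linarith


noncomputable def Ffun (x : ℝ) : ℝ :=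
  (x + 2) ^ 2 / (x + 1) ^ 3 *
    (1/8 + x/4 + x^2/16 - x^3/16 + x^4/32 * (Real.log (x+2) - Real.log x))

noncomputable def Dfun (x : ℝ) : ℝ :=
  -(2*x^5+8*x^4+12*x^3+10*x^2+4*x)/(16*(x+1)^4)
  + x^3*(x+2)*(3*x^2+8*x+8)/(32*(x+1)^4) * (Real.log (x+2) - Real.log x)
  + (x+2)^2*x^4/(32*(x+1)^3) * ((x+2)⁻¹ - x⁻¹)

lemma Ffun_deriv (x : ℝ) (hx : 0 < x) : HasDerivAt Ffun (Dfun x) x := by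
  have hx0 : x ≠ 0 := ne_of_gt hx
  have hx1 : (x:ℝ) + 1 ≠ 0 := by positivity
  have hx2 : (x:ℝ) + 2 ≠ 0 := by positivity
  have hq : HasDerivAt (fun x : ℝ => (x+2)^2/(x+1)^3)
      ((((2:ℕ)*(x+2)^1*1)*(x+1)^3 - (x+2)^2*((3:ℕ)*(x+1)^2*1))/((x+1)^3)^2) x := by
    exact (((hasDerivAt_id x).add_const 2).pow 2).div
      (((hasDerivAt_id x).add_const 1).pow 3) (by positivity)
  have hlog2 : HasDerivAt (fun x : ℝ => Real.log (x+2)) (1/(x+2)) x := by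
    simpa using ((hasDerivAt_id x).add_const 2).log hx2
  have hlogx : HasDerivAt Real.log x⁻¹ x := Real.hasDerivAt_log hx0
  have hinner : HasDerivAt (fun x : ℝ =>
        1/8 + x/4 + x^2/16 - x^3/16 + x^4/32 * (Real.log (x+2) - Real.log x))
      (((0 + 1/4) + (2:ℕ)*x^1/16 - (3:ℕ)*x^2/16)
        + (((4:ℕ)*x^3/32) * (Real.log (x+2) - Real.log x)
           + x^4/32 * (1/(x+2) - x⁻¹))) x := by
    exact ((((hasDerivAt_const x (1/8:ℝ)).add ((hasDerivAt_id x).div_const 4)).add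
      ((hasDerivAt_pow 2 x).div_const 16)).sub ((hasDerivAt_pow 3 x).div_const 16)).add
      (((hasDerivAt_pow 4 x).div_const 32).mul (hlog2.sub hlogx))
  have h := hq.mul hinner
  refine h.congr_deriv ?_
  unfold Dfun
  push_cast
  field_simp
  ring

lemma Dfun_neg (x : ℝ) (hx : 0 < x)
    (hbd : Real.log (x+2) - Real.log x ≤ 2/(x+1) + 2/(3*x*(x+1)*(x+2))) :
    Dfun x < 0 := by
  have hx1 : (0:ℝ) < x + 1 := by linarith
  have hx2 : (0:ℝ) < x + 2 := by linarith
  set L := Real.log (x+2) - Real.log x with hL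
  have hB : (0:ℝ) ≤ x^3*(x+2)*(3*x^2+8*x+8)/(32*(x+1)^4) := by positivity
  have step1 : Dfun x ≤ -(2*x^5+8*x^4+12*x^3+10*x^2+4*x)/(16*(x+1)^4)
      + x^3*(x+2)*(3*x^2+8*x+8)/(32*(x+1)^4) * (2/(x+1) + 2/(3*x*(x+1)*(x+2)))
      + (x+2)^2*x^4/(32*(x+1)^3) * ((x+2)⁻¹ - x⁻¹) := by
    unfold Dfun
    have := mul_le_mul_of_nonneg_left hbd hB
    linarith
  have hM : (0:ℝ) < 96*x*(x+1)^5*(x+2) := by positivity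
  have key : (-(2*x^5+8*x^4+12*x^3+10*x^2+4*x)/(16*(x+1)^4)
      + x^3*(x+2)*(3*x^2+8*x+8)/(32*(x+1)^4) * (2/(x+1) + 2/(3*x*(x+1)*(x+2)))
      + (x+2)^2*x^4/(32*(x+1)^3) * ((x+2)⁻¹ - x⁻¹)) * (96*x*(x+1)^5*(x+2))
      = -(4*x^2*(8*x^3+33*x^2+40*x+12)) := by
    field_simp
    ring
  have hneg : (-(2*x^5+8*x^4+12*x^3+10*x^2+4*x)/(16*(x+1)^4)
      + x^3*(x+2)*(3*x^2+8*x+8)/(32*(x+1)^4) * (2/(x+1) + 2/(3*x*(x+1)*(x+2)))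
      + (x+2)^2*x^4/(32*(x+1)^3) * ((x+2)⁻¹ - x⁻¹)) < 0 := by
    nlinarith [key, hM, mul_pos (mul_pos hx hx) hx, sq_nonneg x]
  linarith
theorem stmt_18 :
    StrictAntiOn
      (fun x : ℝ =>
        ((x + 2) ^ 2 / (x + 1) ^ 3) *
          ∫ t in (0:ℝ)..1, t ^ 2 * (x + t) ^ 2 / (x + 2 * t))
      (Set.Ioi 0) := by
  have hanti : StrictAntiOn Ffun (Set.Ioi 0) := by
    apply strictAntiOn_of_deriv_neg (convex_Ioi 0)
    · intro y hy
      exact (Ffun_deriv y hy).continuousAt.continuousWithinAt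
    · intro y hy
      rw [interior_Ioi] at hy
      rw [(Ffun_deriv y hy).deriv]
      exact Dfun_neg y hy (log_bound y hy)
  intro a ha b hb hab
  have ea : ((a + 2) ^ 2 / (a + 1) ^ 3) *
      (∫ t in (0:ℝ)..1, t ^ 2 * (a + t) ^ 2 / (a + 2 * t)) = Ffun a := by
    rw [integral_eval a ha]; rfl
  have eb : ((b + 2) ^ 2 / (b + 1) ^ 3) *
      (∫ t in (0:ℝ)..1, t ^ 2 * (b + t) ^ 2 / (b + 2 * t)) = Ffun b := by
    rw [integral_eval b hb]; rfl
  simp only [ea, eb]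
  exact hanti ha hb hab
end

section
/- For every real q > 1 and every x > 0, ((x+2)^q/(x+1)^{q+1}) · ∫₀¹ t^q (x+t)^q/(x+2t)^{q−1} dt < 2/(q+2), i.e., among polygonal stadiums the normalized web torsion w_p(P^ℓ)|∂P^ℓ|^q/|P^ℓ|^{q+1} is strictly below its value 2/(q+2) for circumscribed polygons (ℓ = 0). -/
open Real

lemma stmt19_eq (q x t : ℝ) (hq : 1 < q) (hx : 0 < x) (ht : 0 < t) :
    ((x + 2) ^ q / (x + 1) ^ (q + 1)) * (t ^ q * (x + t) ^ q / (x + 2 * t) ^ (q - 1)) =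
      (((x + 2) * t * (x + t) / ((x + 2 * t) * (x + 1))) ^ (2 : ℕ)) ^ (q / 2) *
        ((x + 2 * t) / (x + 1)) := by
  have hb : (0:ℝ) < x + t := by linarith
  have hc : (0:ℝ) < x + 2 * t := by linarith
  have hd : (0:ℝ) < x + 1 := by linarith
  have he : (0:ℝ) < x + 2 := by linarith
  have hz : 0 ≤ (x + 2) * t * (x + t) / ((x + 2 * t) * (x + 1)) := by positivity
  rw [← Real.rpow_natCast ((x + 2) * t * (x + t) / ((x + 2 * t) * (x + 1))) 2,
    ← Real.rpow_mul hz]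
  push_cast
  rw [show (2:ℝ) * (q / 2) = q by ring]
  rw [Real.div_rpow (by positivity) (by positivity),
    Real.mul_rpow (by positivity) hb.le,
    Real.mul_rpow he.le ht.le,
    Real.mul_rpow hc.le hd.le,
    Real.rpow_sub_one hc.ne', Real.rpow_add_one hd.ne']
  have h1 : (x + 2 * t) ^ q ≠ 0 := (Real.rpow_pos_of_pos hc q).ne'
  have h2 : (x + 1) ^ q ≠ 0 := (Real.rpow_pos_of_pos hd q).ne'
  field_simp

theorem stmt_19 (q x : ℝ) (hq : 1 < q) (hx : 0 < x) :
    ((x + 2) ^ q / (x + 1) ^ (q + 1)) *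
        (∫ t in (0:ℝ)..1, t ^ q * (x + t) ^ q / (x + 2 * t) ^ (q - 1)) <
      2 / (q + 2) := by
  have hd : (0:ℝ) < x + 1 := by linarith
  have hq2 : (0:ℝ) < q + 2 := by linarith
  set g : ℝ → ℝ := fun t => (t * (x + t) / (x + 1)) ^ (q / 2) * ((x + 2 * t) / (x + 1))
    with hgdef
  have hgcont : ContinuousOn g (Set.Icc (0:ℝ) 1) := by
    apply ContinuousOn.mul
    · apply ContinuousOn.rpow_const
      · fun_prop
      · intro t _; right; positivity
    · fun_prop
  -- the integral of g is 2/(q+2)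
  have hgint : (∫ t in (0:ℝ)..1, g t) = 2 / (q + 2) := by
    have hG : ∀ t ∈ Set.uIcc (0:ℝ) 1,
        HasDerivAt (fun s => 2 / (q + 2) * (s * (x + s) / (x + 1)) ^ (q / 2 + 1)) (g t) t := by
      intro t _
      have h1 : HasDerivAt (fun s : ℝ => s * (x + s) / (x + 1)) ((x + 2 * t) / (x + 1)) t := by
        have h0 := ((hasDerivAt_id t).mul ((hasDerivAt_const t x).add (hasDerivAt_id t))).div_const
          (x + 1)
        refine h0.congr_deriv ?_
        simp [id]
        ring
      have h2 := (Real.hasDerivAt_rpow_const (x := t * (x + t) / (x + 1)) (p := q / 2 + 1)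
        (Or.inr (by linarith))).comp t h1
      have h3 := h2.const_mul (2 / (q + 2))
      refine h3.congr_deriv ?_
      simp only [hgdef, Function.comp]
      rw [show q / 2 + 1 - 1 = q / 2 by ring]
      field_simp
    rw [intervalIntegral.integral_eq_sub_of_hasDerivAt hG
      (hgcont.intervalIntegrable_of_Icc (by norm_num))]
    have h1 : (1:ℝ) * (x + 1) / (x + 1) = 1 := by field_simp
    have h0 : (0:ℝ) * (x + 0) / (x + 1) = 0 := by ring
    rw [h1, h0, Real.one_rpow, Real.zero_rpow (by positivity : q / 2 + 1 ≠ 0)]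
    ring
  -- pointwise comparison
  have hle : ∀ t ∈ Set.Ioc (0:ℝ) 1,
      ((x + 2) ^ q / (x + 1) ^ (q + 1)) * (t ^ q * (x + t) ^ q / (x + 2 * t) ^ (q - 1)) ≤ g t := by
    intro t ⟨ht0, ht1⟩
    rw [stmt19_eq q x t hq hx ht0]
    apply mul_le_mul_of_nonneg_right _ (by positivity)
    apply Real.rpow_le_rpow (by positivity) _ (by positivity)
    rw [div_pow, div_le_div_iff₀ (by positivity) (by positivity)]
    have key : (x + 2) ^ 2 * (t * (x + t)) ≤ (x + 2 * t) ^ 2 * (x + 1) := by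
      nlinarith [mul_nonneg (mul_nonneg (sq_nonneg x) (by linarith : (0:ℝ) ≤ 1 - t))
        (by linarith : (0:ℝ) ≤ x + 1 + t)]
    nlinarith [mul_le_mul_of_nonneg_left key
      (show (0:ℝ) ≤ t * (x + t) * (x + 1) by positivity)]
  have hlt : ((x + 2) ^ q / (x + 1) ^ (q + 1)) *
      ((1/2 : ℝ) ^ q * (x + 1/2) ^ q / (x + 2 * (1/2)) ^ (q - 1)) < g (1/2) := by
    rw [stmt19_eq q x (1/2) hq hx (by norm_num)]
    apply mul_lt_mul_of_pos_right _ (by positivity)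
    apply Real.rpow_lt_rpow (by positivity) _ (by positivity)
    rw [div_pow, div_lt_div_iff₀ (by positivity) (by positivity)]
    have key : (x + 2) ^ 2 * ((1/2 : ℝ) * (x + 1/2)) < (x + 2 * (1/2)) ^ 2 * (x + 1) := by
      nlinarith [mul_pos (mul_pos (pow_pos hx 2) (by norm_num : (0:ℝ) < 1/2))
        (by linarith : (0:ℝ) < x + 3/2)]
    nlinarith [mul_lt_mul_of_pos_left key
      (show (0:ℝ) < (1/2 : ℝ) * (x + 1/2) * (x + 1) by positivity)]
  have hfcont : ContinuousOn
      (fun t => ((x + 2) ^ q / (x + 1) ^ (q + 1)) * (t ^ q * (x + t) ^ q / (x + 2 * t) ^ (q - 1)))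
      (Set.Icc (0:ℝ) 1) := by
    apply ContinuousOn.mul continuousOn_const
    apply ContinuousOn.div
    · apply ContinuousOn.mul
      · apply ContinuousOn.rpow_const (by fun_prop)
        intro t _; right; linarith
      · apply ContinuousOn.rpow_const (by fun_prop)
        intro t ht; right; linarith
    · apply ContinuousOn.rpow_const (by fun_prop)
      intro t ht; right; linarith
    · intro t ht
      exact (Real.rpow_pos_of_pos (by rcases ht with ⟨h1, h2⟩; linarith) (q - 1)).ne'
  rw [← intervalIntegral.integral_const_mul]
  calc (∫ t in (0:ℝ)..1,
        ((x + 2) ^ q / (x + 1) ^ (q + 1)) * (t ^ q * (x + t) ^ q / (x + 2 * t) ^ (q - 1)))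
      < ∫ t in (0:ℝ)..1, g t := by
        apply intervalIntegral.integral_lt_integral_of_continuousOn_of_le_of_exists_lt
          one_pos hfcont hgcont hle
        exact ⟨1/2, by norm_num, hlt⟩
    _ = 2 / (q + 2) := hgint
end
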